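/- In particular, if k is a Cartan (abelian) subalgebra of g, then for any two adjoint-invariant functions f, p on g and any λ, μ ∈ ℝ, the shifted functions f_λ(x) = f(pr_k x + λ pr_{k^⊥} x) and p_μ(x) = p(pr_k x + μ pr_{k^⊥} x) Lie–Poisson commute on g. -/

import Mathlib

open RealInnerProductSpace

section Aux

variable {E : Type*} [NormedAddCommGroup E] [InnerProductSpace ℝ E] [FiniteDimensional ℝ E]

lemma my_inner_gradient (f : E → ℝ) (z h : E) :
    ⟪gradient f z, h⟫ = fderiv ℝ f z h := by
  rw [gradient, InnerProductSpace.toDual_symm_apply]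

lemma my_skew (bk : E →ₗ[ℝ] E →ₗ[ℝ] E) (hskew : ∀ x : E, bk x x = 0) (a b : E) :
    bk a b = - bk b a := by
  have h := hskew (a + b)
  simp only [map_add, LinearMap.add_apply, hskew, zero_add, add_zero] at h
  exact eq_neg_of_add_eq_zero_right h

/-- Key lemma: the gradient of an invariant function at `y` commutes with everything
that commutes with `y`. -/
lemma my_key (bk : E →ₗ[ℝ] E →ₗ[ℝ] E)
    (hskew : ∀ x : E, bk x x = 0)
    (hinv : ∀ x y z : E, ⟪bk x y, z⟫ = ⟪x, bk y z⟫)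
    (f : E → ℝ) (hfd : Differentiable ℝ f)
    (hf : ∀ z : E, bk (gradient f z) z = 0)
    (y w : E) (hw : bk w y = 0) :
    bk (gradient f y) w = 0 := by
  classical
  set M : E →L[ℝ] E := LinearMap.toContinuousLinearMap (bk w) with hM
  have hMapp : ∀ z : E, M z = bk w z := fun z => rfl
  -- Step 1 : flow invariance of f
  have step1 : ∀ (z : E) (t : ℝ), f (NormedSpace.exp (t • M) z) = f z := by
    intro z t
    have hder : ∀ s : ℝ, HasDerivAt (fun s : ℝ => f (NormedSpace.exp (s • M) z)) 0 s := by
      intro s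
      have h1 : HasDerivAt (fun s : ℝ => NormedSpace.exp (s • M))
          (M * NormedSpace.exp (s • M)) s := hasDerivAt_exp_smul_const' M s
      have h2 : HasDerivAt (fun s : ℝ => NormedSpace.exp (s • M) z)
          ((M * NormedSpace.exp (s • M)) z) s := by
        simpa using h1.clm_apply (hasDerivAt_const s z)
      have h3 := ((hfd _).hasFDerivAt).comp_hasDerivAt s h2
      have hval : fderiv ℝ f (NormedSpace.exp (s • M) z)
          ((M * NormedSpace.exp (s • M)) z) = 0 := by
        set ζ := NormedSpace.exp (s • M) z with hζ
        have he : (M * NormedSpace.exp (s • M)) z = bk w ζ := by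
          rw [ContinuousLinearMap.mul_apply]; rfl
        rw [he, ← my_inner_gradient f ζ]
        rw [my_skew bk hskew w ζ, inner_neg_right, ← hinv, hf ζ, inner_zero_left, neg_zero]
      rw [hval] at h3
      exact h3
    have hconst := is_const_of_deriv_eq_zero
      (fun s => (hder s).differentiableAt) (fun s => (hder s).deriv) t 0
    simpa using hconst
  -- Step 2 : exp (t • M) fixes y
  have step2 : ∀ t : ℝ, NormedSpace.exp (t • M) y = y := by
    intro t
    have hder : ∀ s : ℝ, HasDerivAt (fun s : ℝ => NormedSpace.exp (s • M) y) 0 s := by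
      intro s
      have h1 : HasDerivAt (fun s : ℝ => NormedSpace.exp (s • M))
          (NormedSpace.exp (s • M) * M) s := hasDerivAt_exp_smul_const M s
      have h2 : HasDerivAt (fun s : ℝ => NormedSpace.exp (s • M) y)
          ((NormedSpace.exp (s • M) * M) y) s := by
        simpa using h1.clm_apply (hasDerivAt_const s y)
      have he : (NormedSpace.exp (s • M) * M) y = 0 := by
        rw [ContinuousLinearMap.mul_apply, hMapp, hw, map_zero]
      rwa [he] at h2
    have hconst := is_const_of_deriv_eq_zero
      (fun s => (hder s).differentiableAt) (fun s => (hder s).deriv) t 0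
    simpa using hconst
  -- Step 3 : fderiv f y ∘ exp(t • M) = fderiv f y
  have step3 : ∀ (t : ℝ) (h : E),
      fderiv ℝ f y (NormedSpace.exp (t • M) h) = fderiv ℝ f y h := by
    intro t h
    have hfun : (fun z => f (NormedSpace.exp (t • M) z)) = f := funext fun z => step1 z t
    have hcomp : HasFDerivAt (fun z => f (NormedSpace.exp (t • M) z))
        ((fderiv ℝ f y).comp (NormedSpace.exp (t • M))) y := by
      have h0 := ((hfd (NormedSpace.exp (t • M) y)).hasFDerivAt).comp y
        (NormedSpace.exp (t • M)).hasFDerivAt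
      rw [step2 t] at h0
      exact h0
    have heq := hcomp.fderiv
    rw [hfun] at heq
    conv_rhs => rw [heq]
    rfl
  -- Step 4 : fderiv f y kills the image of ad_w
  have step4 : ∀ h : E, fderiv ℝ f y (bk w h) = 0 := by
    intro h
    have hφ : (fun t : ℝ => fderiv ℝ f y (NormedSpace.exp (t • M) h))
        = fun _ => fderiv ℝ f y h := funext fun t => step3 t h
    have h1 : HasDerivAt (fun t : ℝ => NormedSpace.exp (t • M) h)
        ((NormedSpace.exp ((0 : ℝ) • M) * M) h) 0 := by
      simpa using (hasDerivAt_exp_smul_const M (0 : ℝ)).clm_apply (hasDerivAt_const (0 : ℝ) h)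
    have h2 := ((fderiv ℝ f y).hasFDerivAt).comp_hasDerivAt 0 h1
    have h3 := h2.deriv
    simp only [Function.comp_def] at h3
    rw [hφ, deriv_const] at h3
    have h4 : (NormedSpace.exp ((0 : ℝ) • M) * M) h = bk w h := by
      rw [zero_smul, NormedSpace.exp_zero, one_mul]; rfl
    rw [h4] at h3
    exact h3.symm
  -- conclude
  have step5 : ∀ h : E, ⟪bk (gradient f y) w, h⟫ = 0 := by
    intro h
    rw [hinv, my_inner_gradient, step4]
  have := step5 (bk (gradient f y) w)
  exact inner_self_eq_zero.mp this

lemma my_gradient_comp (T : E →L[ℝ] E) (hT : ∀ a b : E, ⟪T a, b⟫ = ⟪a, T b⟫)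
    (f : E → ℝ) (hfd : Differentiable ℝ f) (g : E → ℝ) (hg : ∀ z, g z = f (T z)) (x : E) :
    gradient g x = T (gradient f (T x)) := by
  have hgf : g = fun z => f (T z) := funext hg
  have hcomp : HasFDerivAt g ((fderiv ℝ f (T x)).comp T) x := by
    rw [hgf]; exact ((hfd (T x)).hasFDerivAt).comp x T.hasFDerivAt
  have hfd' : fderiv ℝ g x = (fderiv ℝ f (T x)).comp T := hcomp.fderiv
  refine ext_inner_right (𝕜 := ℝ) fun v => ?_
  rw [my_inner_gradient, hfd']
  have h1 : ((fderiv ℝ f (T x)).comp T) v = fderiv ℝ f (T x) (T v) := rfl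
  rw [h1, ← my_inner_gradient, ← hT]

end Aux

/-- if `K` is an abelian (Cartan) subalgebra of a Lie algebra `E` with
invariant inner product, and `f`, `p` are adjoint-invariant differentiable functions,
then for any `l, m ∈ ℝ` the shifted functions `f_l(x) = f(pr_K x + l • pr_{Kᗮ} x)` and
`p_m(x) = p(pr_K x + m • pr_{Kᗮ} x)` Lie–Poisson commute on `E`. -/
theorem cartan_shifted_invariants_commute
    {E : Type*} [NormedAddCommGroup E] [InnerProductSpace ℝ E] [FiniteDimensional ℝ E]
    (bk : E →ₗ[ℝ] E →ₗ[ℝ] E)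
    (hskew : ∀ x : E, bk x x = 0)
    (hjac : ∀ x y z : E, bk x (bk y z) = bk (bk x y) z + bk y (bk x z))
    (hinv : ∀ x y z : E, ⟪bk x y, z⟫ = ⟪x, bk y z⟫)
    (K : Submodule ℝ E)
    (hab : ∀ a ∈ K, ∀ b ∈ K, bk a b = 0)
    (f p : E → ℝ) (hfd : Differentiable ℝ f) (hpd : Differentiable ℝ p)
    (hf : ∀ z : E, bk (gradient f z) z = 0)
    (hp : ∀ z : E, bk (gradient p z) z = 0)
    (l m : ℝ) (fl pm : E → ℝ)
    (hfl : ∀ x : E, fl x =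
      f ((K.orthogonalProjectionOnto x : E) + l • (x - (K.orthogonalProjectionOnto x : E))))
    (hpm : ∀ x : E, pm x =
      p ((K.orthogonalProjectionOnto x : E) + m • (x - (K.orthogonalProjectionOnto x : E)))) :
    ∀ x : E, ⟪x, bk (gradient fl x) (gradient pm x)⟫ = 0 := by
  intro x
  set Pc : E →L[ℝ] E := K.subtypeL.comp (K.orthogonalProjectionOnto) with hPcdef
  have hPcz : ∀ z : E, Pc z = (K.orthogonalProjectionOnto z : E) := fun z => rfl
  have hPsa : ∀ a b : E, ⟪Pc a, b⟫ = ⟪a, Pc b⟫ := fun a b =>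
    Submodule.inner_starProjection_left_eq_right K a b
  set Tl : E →L[ℝ] E := Pc + l • (ContinuousLinearMap.id ℝ E - Pc) with hTldef
  set Tm : E →L[ℝ] E := Pc + m • (ContinuousLinearMap.id ℝ E - Pc) with hTmdef
  have hTlz : ∀ z : E, Tl z = Pc z + l • (z - Pc z) := by
    intro z
    simp [hTldef, ContinuousLinearMap.add_apply, ContinuousLinearMap.smul_apply,
      ContinuousLinearMap.sub_apply]
  have hTmz : ∀ z : E, Tm z = Pc z + m • (z - Pc z) := by
    intro z
    simp [hTmdef, ContinuousLinearMap.add_apply, ContinuousLinearMap.smul_apply,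
      ContinuousLinearMap.sub_apply]
  have hTlsa : ∀ a b : E, ⟪Tl a, b⟫ = ⟪a, Tl b⟫ := by
    intro a b
    rw [hTlz, hTlz]
    simp only [inner_add_left, inner_add_right, real_inner_smul_left, real_inner_smul_right,
      inner_sub_left, inner_sub_right, hPsa a b]
  have hTmsa : ∀ a b : E, ⟪Tm a, b⟫ = ⟪a, Tm b⟫ := by
    intro a b
    rw [hTmz, hTmz]
    simp only [inner_add_left, inner_add_right, real_inner_smul_left, real_inner_smul_right,
      inner_sub_left, inner_sub_right, hPsa a b]
  -- the shifted gradients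
  set u : E := gradient f (Tl x) with hu_def
  set v : E := gradient p (Tm x) with hv_def
  have hW : gradient fl x = Tl u := by
    refine my_gradient_comp Tl hTlsa f hfd fl (fun z => ?_) x
    rw [hfl z, hTlz z, hPcz]
  have hZ : gradient pm x = Tm v := by
    refine my_gradient_comp Tm hTmsa p hpd pm (fun z => ?_) x
    rw [hpm z, hTmz z, hPcz]
  -- notation
  set c : E := Pc x with hc_def
  set d : E := x - c with hd_def
  set cu : E := Pc u with hcu_def
  set cv : E := Pc v with hcv_def
  have hcK : c ∈ K := SetLike.coe_mem _
  have hcuK : cu ∈ K := SetLike.coe_mem _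
  have hcvK : cv ∈ K := SetLike.coe_mem _
  have hxcd : x = c + d := by rw [hd_def]; abel
  have hTlx : Tl x = c + l • d := by rw [hTlz x, hc_def, hd_def]
  have hTmx : Tm x = c + m • d := by rw [hTmz x, hc_def, hd_def]
  -- invariance constraints
  have hu : bk u c + l • bk u d = 0 := by
    have h0 := hf (Tl x)
    rw [← hu_def, hTlx] at h0
    simpa [map_add, map_smul] using h0
  have hv : bk v c + m • bk v d = 0 := by
    have h0 := hp (Tm x)
    rw [← hv_def, hTmx] at h0
    simpa [map_add, map_smul] using h0
  have huc : bk u c = -(l • bk u d) := eq_neg_of_add_eq_zero_left hu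
  have hvc : bk v c = -(m • bk v d) := eq_neg_of_add_eq_zero_left hv
  have hux : bk u x = (1 - l) • bk u d := by
    rw [hxcd, map_add, huc, sub_smul, one_smul]; abel
  have hvx : bk v x = (1 - m) • bk v d := by
    rw [hxcd, map_add, hvc, sub_smul, one_smul]; abel
  -- basic scalar identities
  have h4 : l * ⟪bk u d, cv⟫ = 0 := by
    rw [← real_inner_smul_left, ← neg_neg (l • bk u d), ← huc, inner_neg_left, hinv,
      hab c hcK cv hcvK, inner_zero_right, neg_zero]
  have h5 : m * ⟪bk v d, cu⟫ = 0 := by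
    rw [← real_inner_smul_left, ← neg_neg (m • bk v d), ← hvc, inner_neg_left, hinv,
      hab c hcK cu hcuK, inner_zero_right, neg_zero]
  have h7 : m * ⟪x, bk cu v⟫ = 0 := by
    have e1 : ⟪x, bk cu v⟫ = (1 - m) * ⟪bk v d, cu⟫ := by
      rw [my_skew bk hskew cu v, inner_neg_right, ← hinv, my_skew bk hskew x v,
        inner_neg_left, neg_neg, hvx, real_inner_smul_left]
    rw [e1]; linear_combination (1 - m) * h5
  have h8 : l * ⟪x, bk u cv⟫ = 0 := by
    have e2 : ⟪x, bk u cv⟫ = -((1 - l) * ⟪bk u d, cv⟫) := by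
      rw [← hinv, my_skew bk hskew x u, inner_neg_left, hux, real_inner_smul_left]
    rw [e2]; linear_combination -(1 - l) * h4
  have h6 : ⟪x, bk u v⟫ = 0 := by
    have hA : ⟪x, bk u v⟫ = -((1 - l) * ⟪bk u d, v⟫) := by
      rw [← hinv, my_skew bk hskew x u, inner_neg_left, hux, real_inner_smul_left]
    by_cases hlm : l = m
    · have hvy : bk v (Tl x) = 0 := by
        rw [hTlx, hlm, ← hTmx]
        have := hp (Tm x); rw [← hv_def] at this; exact this
      have := my_key bk hskew hinv f hfd hf (Tl x) v hvy
      rw [← hu_def] at this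
      rw [this, inner_zero_right]
    · have hB : ⟪x, bk u v⟫ = -((1 - m) * ⟪bk u d, v⟫) := by
        rw [my_skew bk hskew u v, inner_neg_right, ← hinv, my_skew bk hskew x v,
          inner_neg_left, neg_neg, hvx, real_inner_smul_left]
        have e3 : ⟪bk v d, u⟫ = -⟪bk u d, v⟫ := by
          rw [hinv, my_skew bk hskew d u, inner_neg_right, real_inner_comm]
        rw [e3]; ring
      have hT0 : ⟪bk u d, v⟫ = 0 := by
        have hsub : (m - l) * ⟪bk u d, v⟫ = 0 := by linear_combination hA - hB
        rcases mul_eq_zero.mp hsub with h | h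
        · exact absurd (by linarith : l = m) hlm
        · exact h
      rw [hA, hT0]; ring
  -- final assembly
  have hcc : bk cu cv = 0 := hab cu hcuK cv hcvK
  rw [hW, hZ, hTlz u, hTmz v, ← hcu_def, ← hcv_def]
  simp only [map_add, map_smul, map_sub, LinearMap.add_apply, LinearMap.smul_apply,
    LinearMap.sub_apply, inner_add_right, inner_sub_right, real_inner_smul_right, hcc,
    inner_zero_right]
  linear_combination (1 - l) * h7 + (1 - m) * h8 + (l * m) * h6
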